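/- (Quantitative Korovkin estimate for Lipschitz functions) Let X be a compact metric space and (T_n) a sequence of unital, sublinear and monotone operators from C(X) to C(X). If f ∈ C(X) is nonnegative and Lipschitz with constant K, then for all x ∈ X and n, |T_n(f)(x) - f(x)| ≤ K · sup_{y∈X} |T_n(d_y²)(y)|^{1/2}, where d_y(z) = d(y,z). -/

import Mathlib

/-- Quantitative Korovkin estimate for Lipschitz functions: for unital, sublinear,
monotone operators `T_n` on `C(X)` and a nonnegative `K`-Lipschitz `f`,
`|T_n f x - f x| ≤ K · sup_y |T_n(d_y²)(y)|^{1/2}`. -/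
theorem stmt13 {X : Type*} [MetricSpace X] [CompactSpace X]
    (T : ℕ → C(X, ℝ) → C(X, ℝ))
    (hunit : ∀ n, T n 1 = 1)
    (hsub : ∀ n (f g : C(X, ℝ)), T n (f + g) ≤ T n f + T n g)
    (hhom : ∀ n (a : ℝ) (f : C(X, ℝ)), 0 ≤ a → T n (a • f) = a • T n f)
    (hmono : ∀ n (f g : C(X, ℝ)), f ≤ g → T n f ≤ T n g)
    (D : X → C(X, ℝ)) (hD : ∀ y z, D y z = dist y z ^ 2)
    (f : C(X, ℝ)) (hf0 : 0 ≤ f) (K : ℝ) (hK : 0 ≤ K)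
    (hlip : ∀ x y : X, |f x - f y| ≤ K * dist x y) :
    ∀ (x : X) (n : ℕ),
      |T n f x - f x| ≤ K * ⨆ y : X, Real.sqrt |T n (D y) y| := by
  intro x n
  have hT0 : T n 0 = 0 := by
    have := hhom n 0 0 le_rfl
    simpa using this
  have hTpos : ∀ g : C(X, ℝ), 0 ≤ g → 0 ≤ T n g := fun g hg => hT0 ▸ hmono n 0 g hg
  -- nonnegativity of T n (D y) y
  have hDy0 : ∀ y : X, (0 : C(X, ℝ)) ≤ D y := by
    intro y
    rw [ContinuousMap.le_def]
    intro z
    simp [hD y z]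
  have hTD0 : ∀ y : X, 0 ≤ T n (D y) y := by
    intro y
    have := ContinuousMap.le_def.mp (hTpos (D y) (hDy0 y)) y
    simpa using this
  set a := T n (D x) x with ha
  have ha0 : 0 ≤ a := hTD0 x
  have hfx0 : 0 ≤ f x := ContinuousMap.le_def.mp hf0 x
  -- key estimate for every t > 0
  have key : ∀ t : ℝ, 0 < t → |T n f x - f x| ≤ K * t / 2 + K / (2 * t) * a := by
    intro t ht
    set c : ℝ := K * t / 2 with hc
    set b : ℝ := K / (2 * t) with hb
    have hc0 : 0 ≤ c := by positivity
    have hb0 : 0 ≤ b := by positivity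
    -- pointwise upper bound for f
    have h₁ : f ≤ f x • (1 : C(X, ℝ)) + c • 1 + b • D x := by
      rw [ContinuousMap.le_def]
      intro y
      have h1 := hlip y x
      have h2' : 2 * t * dist x y ≤ t ^ 2 + dist x y ^ 2 := by
        nlinarith [sq_nonneg (dist x y - t)]
      have h2 : dist x y ≤ t / 2 + dist x y ^ 2 / (2 * t) := by
        have h2'' : dist x y ≤ (t ^ 2 + dist x y ^ 2) / (2 * t) := by
          rw [le_div_iff₀ (by positivity)]; linarith
        have heq : (t ^ 2 + dist x y ^ 2) / (2 * t) = t / 2 + dist x y ^ 2 / (2 * t) := by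
          field_simp
        linarith [heq ▸ h2'']
      have h3 : |f y - f x| ≤ K * dist x y := by
        rwa [dist_comm y x] at h1
      have h4 := abs_le.mp h3
      simp only [ContinuousMap.add_apply, ContinuousMap.smul_apply,
        ContinuousMap.one_apply, smul_eq_mul, mul_one, hD x y]
      have h5 : K * dist x y ≤ c + b * dist x y ^ 2 := by
        rw [hc, hb]
        have := mul_le_mul_of_nonneg_left h2 hK
        calc K * dist x y ≤ K * (t / 2 + dist x y ^ 2 / (2 * t)) := this
          _ = K * t / 2 + K / (2 * t) * dist x y ^ 2 := by ring
      linarith [h4.2]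
    -- pointwise lower bound
    have h₂ : f x • (1 : C(X, ℝ)) ≤ f + c • 1 + b • D x := by
      rw [ContinuousMap.le_def]
      intro y
      have h1 := hlip x y
      have h2' : 2 * t * dist x y ≤ t ^ 2 + dist x y ^ 2 := by
        nlinarith [sq_nonneg (dist x y - t)]
      have h2 : dist x y ≤ t / 2 + dist x y ^ 2 / (2 * t) := by
        have h2'' : dist x y ≤ (t ^ 2 + dist x y ^ 2) / (2 * t) := by
          rw [le_div_iff₀ (by positivity)]; linarith
        have heq : (t ^ 2 + dist x y ^ 2) / (2 * t) = t / 2 + dist x y ^ 2 / (2 * t) := by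
          field_simp
        linarith [heq ▸ h2'']
      have h4 := abs_le.mp h1
      simp only [ContinuousMap.add_apply, ContinuousMap.smul_apply,
        ContinuousMap.one_apply, smul_eq_mul, mul_one, hD x y]
      have h5 : K * dist x y ≤ c + b * dist x y ^ 2 := by
        rw [hc, hb]
        have := mul_le_mul_of_nonneg_left h2 hK
        calc K * dist x y ≤ K * (t / 2 + dist x y ^ 2 / (2 * t)) := this
          _ = K * t / 2 + K / (2 * t) * dist x y ^ 2 := by ring
      linarith [h4.2]
    -- value of T on the majorant, evaluated at x
    have hTsum : ∀ g : C(X, ℝ), T n (g + c • 1 + b • D x) x ≤ T n g x + c + b * a := by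
      intro g
      have e1 := ContinuousMap.le_def.mp (hsub n (g + c • 1) (b • D x)) x
      have e2 := ContinuousMap.le_def.mp (hsub n g (c • 1)) x
      have e3 : T n (c • 1) x = c := by
        rw [hhom n c 1 hc0, hunit n]; simp
      have e4 : T n (b • D x) x = b * a := by
        rw [hhom n b (D x) hb0]; simp [ha]
      simp only [ContinuousMap.add_apply] at e1 e2
      linarith
    -- upper bound : T n f x - f x ≤ c + b * a
    have up : T n f x - f x ≤ c + b * a := by
      have h6 := ContinuousMap.le_def.mp (hmono n _ _ h₁) x
      have h7 := hTsum (f x • 1)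
      have e5 : T n ((f x) • (1 : C(X, ℝ))) = (f x) • T n 1 := hhom n (f x) 1 hfx0
      rw [e5, hunit n] at h7
      simp only [ContinuousMap.smul_apply, ContinuousMap.one_apply, smul_eq_mul,
        mul_one] at h7
      linarith
    -- lower bound : f x - T n f x ≤ c + b * a
    have lo : f x - T n f x ≤ c + b * a := by
      have e5 : T n ((f x) • (1 : C(X, ℝ))) = (f x) • T n 1 := hhom n (f x) 1 hfx0
      have h6 := ContinuousMap.le_def.mp (hmono n _ _ h₂) x
      rw [e5, hunit n] at h6
      have h7 := hTsum f
      simp only [ContinuousMap.smul_apply, ContinuousMap.one_apply, smul_eq_mul,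
        mul_one] at h6
      linarith
    rw [abs_le]
    constructor <;> linarith
  -- optimize: |T n f x - f x| ≤ K * sqrt a
  set s : ℝ := Real.sqrt a with hs
  have hss : s ^ 2 = a := Real.sq_sqrt ha0
  have main : |T n f x - f x| ≤ K * s := by
    rcases lt_or_eq_of_le (Real.sqrt_nonneg a) with hpos | hzero
    · have := key s hpos
      have : |T n f x - f x| ≤ K * s / 2 + K / (2 * s) * a := this
      rw [← hss] at this
      have hrw : K * s / 2 + K / (2 * s) * s ^ 2 = K * s := by
        field_simp
        ring
      linarith [hrw ▸ this]
    · -- s = 0, so a = 0; show |…| ≤ 0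
      have hs0 : s = 0 := hzero.symm
      have ha0' : a = 0 := by
        rw [← hss, hs0]; ring
      rw [hs0, mul_zero]
      by_contra hcon
      push_neg at hcon
      rcases eq_or_lt_of_le hK with hK0 | hKpos
      · have := key 1 one_pos
        rw [ha0', ← hK0] at this
        simp at this
        rw [this] at hcon
        simp at hcon
      · set ε := |T n f x - f x| with hε
        have := key (ε / K) (div_pos hcon hKpos)
        rw [ha0'] at this
        have : ε ≤ K * (ε / K) / 2 := by linarith
        rw [mul_div_cancel₀ _ (ne_of_gt hKpos)] at this
        linarith
  -- compare with the supremum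
  have hbdd : BddAbove (Set.range fun y : X => Real.sqrt |T n (D y) y|) := by
    set C := Metric.diam (Set.univ : Set X) with hC
    have hC0 : 0 ≤ C := Metric.diam_nonneg
    refine ⟨C, ?_⟩
    rintro _ ⟨y, rfl⟩
    have hub : T n (D y) y ≤ C ^ 2 := by
      have hle : D y ≤ (C ^ 2) • (1 : C(X, ℝ)) := by
        rw [ContinuousMap.le_def]
        intro z
        simp only [ContinuousMap.smul_apply, ContinuousMap.one_apply, smul_eq_mul,
          mul_one, hD y z]
        have := Metric.dist_le_diam_of_mem (isCompact_univ.isBounded)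
          (Set.mem_univ y) (Set.mem_univ z)
        nlinarith [dist_nonneg (x := y) (y := z)]
      have h6 := ContinuousMap.le_def.mp (hmono n _ _ hle) y
      rw [hhom n (C ^ 2) 1 (by positivity), hunit n] at h6
      simpa using h6
    have : |T n (D y) y| ≤ C ^ 2 := by
      rw [abs_of_nonneg (hTD0 y)]; exact hub
    calc Real.sqrt |T n (D y) y| ≤ Real.sqrt (C ^ 2) := Real.sqrt_le_sqrt this
      _ = C := by rw [Real.sqrt_sq hC0]
  have hle : s ≤ ⨆ y : X, Real.sqrt |T n (D y) y| := by
    have := le_ciSup hbdd x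
    rw [← ha, abs_of_nonneg ha0] at this; exact this
  calc |T n f x - f x| ≤ K * s := main
    _ ≤ K * ⨆ y : X, Real.sqrt |T n (D y) y| := mul_le_mul_of_nonneg_left hle hK
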